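/- In the N-period model with log-returns bounded by σ_high in absolute value and nonnegative transaction costs, suppose the strategy π = (y, γ) with y ≤ A super-replicates a nonnegative claim, i.e., its mark-to-market value Y^π_n ≥ 0 for all n (along every admissible scenario). Then for every n, Y^π_n ≤ A(1 + e^{σ_high})^n and |γ_n| ≤ A(1 + e^{σ_high})^n / ((1 - e^{-σ_high}) S_n), where S_n ≥ s₀ e^{-σ_high N}. In particular the positions γ_n are uniformly bounded by A(1 + e^{σ_high})^N / ((1 - e^{-σ_high}) s₀ e^{-σ_high N}). -/
import Mathlib


open Finset

/-- The stock price in the `N`-period model. -/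
noncomputable def stock11 (N : ℕ) (s0 : ℝ) (ω : Fin N → ℝ) (n : ℕ) : ℝ :=
  s0 * Real.exp (∑ m ∈ Finset.univ.filter (fun m : Fin N => (m : ℕ) < n), ω m)

/-- A strategy is adapted if its position at time `n` depends only on the first `n`
returns. -/
def adapted11 (N : ℕ) (γ : ℕ → (Fin N → ℝ) → ℝ) : Prop :=
  ∀ n : ℕ, ∀ ω ω' : Fin N → ℝ, (∀ m : Fin N, (m : ℕ) < n → ω m = ω' m) → γ n ω = γ n ω'

/-- The mark-to-market wealth of the strategy `(y, γ)` after `n` trading periods. -/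
noncomputable def wealth11 (N : ℕ) (s0 : ℝ) (g : ℕ → (Fin N → ℝ) → ℝ → ℝ)
    (y : ℝ) (γ : ℕ → (Fin N → ℝ) → ℝ) (ω : Fin N → ℝ) (n : ℕ) : ℝ :=
  y + ∑ k ∈ Finset.range n,
    (γ k ω * (stock11 N s0 ω (k + 1) - stock11 N s0 ω k)
      - g k ω ((γ k ω - (if k = 0 then 0 else γ (k - 1) ω)) * stock11 N s0 ω k))

lemma stock11_pos (N : ℕ) (s0 : ℝ) (hs0 : 0 < s0) (ω : Fin N → ℝ) (n : ℕ) :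
    0 < stock11 N s0 ω n := mul_pos hs0 (Real.exp_pos _)

lemma filter_lt_succ (N n : ℕ) (hn : n < N) :
    (Finset.univ.filter (fun m : Fin N => (m : ℕ) < n + 1))
      = insert ⟨n, hn⟩ (Finset.univ.filter (fun m : Fin N => (m : ℕ) < n)) := by
  ext m
  simp only [Finset.mem_filter, Finset.mem_insert, Finset.mem_univ, true_and, Fin.ext_iff]
  omega

lemma stock11_succ (N : ℕ) (s0 : ℝ) (ω : Fin N → ℝ) (n : ℕ) (hn : n < N) :
    stock11 N s0 ω (n + 1) = stock11 N s0 ω n * Real.exp (ω ⟨n, hn⟩) := by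
  unfold stock11
  rw [filter_lt_succ N n hn, Finset.sum_insert (by simp), Real.exp_add]
  ring

lemma stock11_lb (N : ℕ) (s0 σhigh : ℝ) (hs0 : 0 < s0) (hσh : 0 ≤ σhigh) (ω : Fin N → ℝ)
    (hω : ∀ m, |ω m| ≤ σhigh) (n : ℕ) :
    s0 * Real.exp (-(σhigh * N)) ≤ stock11 N s0 ω n := by
  unfold stock11
  apply mul_le_mul_of_nonneg_left _ hs0.le
  apply Real.exp_le_exp.2
  set F := Finset.univ.filter (fun m : Fin N => (m : ℕ) < n) with hF
  have h1 : ∀ m ∈ F, -σhigh ≤ ω m := fun m _ => (abs_le.1 (hω m)).1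
  have h2 : F.card • (-σhigh) ≤ ∑ m ∈ F, ω m := Finset.card_nsmul_le_sum F ω (-σhigh) h1
  have h3 : (F.card : ℝ) ≤ N := by
    exact_mod_cast (Finset.card_filter_le _ _).trans (by simp)
  simp only [nsmul_eq_mul] at h2
  nlinarith

lemma stock11_update (N : ℕ) (s0 : ℝ) (n k : ℕ) (hn : n < N) (hk : k ≤ n)
    (ω : Fin N → ℝ) (c : ℝ) :
    stock11 N s0 (Function.update ω ⟨n, hn⟩ c) k = stock11 N s0 ω k := by
  unfold stock11
  congr 1
  congr 1
  apply Finset.sum_congr rfl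
  intro m hm
  simp only [Finset.mem_filter] at hm
  exact Function.update_of_ne (by simp only [ne_eq, Fin.ext_iff]; omega) _ _

lemma wealth11_succ (N : ℕ) (s0 : ℝ) (g : ℕ → (Fin N → ℝ) → ℝ → ℝ)
    (y : ℝ) (γ : ℕ → (Fin N → ℝ) → ℝ) (ω : Fin N → ℝ) (n : ℕ) :
    wealth11 N s0 g y γ ω (n + 1) = wealth11 N s0 g y γ ω n
      + (γ n ω * (stock11 N s0 ω (n + 1) - stock11 N s0 ω n)
        - g n ω ((γ n ω - (if n = 0 then 0 else γ (n - 1) ω)) * stock11 N s0 ω n)) := by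
  unfold wealth11
  rw [Finset.sum_range_succ]
  ring

lemma gamma_key (N : ℕ) (s0 σlow σhigh : ℝ) (hs0 : 0 < s0)
    (hσ : σlow ≤ σhigh) (hσh : 0 < σhigh)
    (g : ℕ → (Fin N → ℝ) → ℝ → ℝ) (hg : ∀ n ω β, 0 ≤ g n ω β)
    (y : ℝ) (γ : ℕ → (Fin N → ℝ) → ℝ) (hγ : adapted11 N γ)
    (hsuper : ∀ ω : Fin N → ℝ, (∀ m, σlow ≤ |ω m| ∧ |ω m| ≤ σhigh) →
      ∀ n : ℕ, n ≤ N → 0 ≤ wealth11 N s0 g y γ ω n)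
    (W : ℝ) (n : ℕ) (hn : n < N)
    (hbd : ∀ ω' : Fin N → ℝ, (∀ m, σlow ≤ |ω' m| ∧ |ω' m| ≤ σhigh) →
      wealth11 N s0 g y γ ω' n ≤ W)
    (ω : Fin N → ℝ) (hω : ∀ m, σlow ≤ |ω m| ∧ |ω m| ≤ σhigh) :
    |γ n ω| * ((1 - Real.exp (-σhigh)) * stock11 N s0 ω n) ≤ W := by
  have hS : 0 < stock11 N s0 ω n := stock11_pos N s0 hs0 ω n
  have key : ∀ c : ℝ, |c| = σhigh →
      0 ≤ W + γ n ω * (stock11 N s0 ω n * (Real.exp c - 1)) := by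
    intro c hc
    set ω' := Function.update ω ⟨n, hn⟩ c with hω'def
    have hadm : ∀ m, σlow ≤ |ω' m| ∧ |ω' m| ≤ σhigh := by
      intro m
      by_cases h : m = (⟨n, hn⟩ : Fin N)
      · subst h
        rw [hω'def, Function.update_self, hc]
        exact ⟨hσ, le_rfl⟩
      · rw [hω'def, Function.update_of_ne h]
        exact hω m
    have hγeq : γ n ω' = γ n ω := by
      apply hγ n ω' ω
      intro m hm
      exact Function.update_of_ne (by simp only [ne_eq, Fin.ext_iff]; omega) _ _
    have hsn : stock11 N s0 ω' n = stock11 N s0 ω n :=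
      stock11_update N s0 n n hn le_rfl ω c
    have hsn1 : stock11 N s0 ω' (n + 1) = stock11 N s0 ω n * Real.exp c := by
      rw [stock11_succ N s0 ω' n hn, hsn, hω'def, Function.update_self]
    have h0 : 0 ≤ wealth11 N s0 g y γ ω' (n + 1) := hsuper ω' hadm (n + 1) hn
    rw [wealth11_succ, hγeq, hsn, hsn1] at h0
    have hw := hbd ω' hadm
    have hgp : 0 ≤ g n ω' ((γ n ω - (if n = 0 then 0 else γ (n - 1) ω')) * stock11 N s0 ω n) :=
      hg _ _ _
    nlinarith [h0, hw, hgp]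
  have hm := key (-σhigh) (by rw [abs_neg, abs_of_pos hσh])
  have hp := key σhigh (abs_of_pos hσh)
  have hee' : Real.exp σhigh * Real.exp (-σhigh) = 1 := by
    rw [← Real.exp_add]; simp
  have hep : 0 < Real.exp (-σhigh) := Real.exp_pos _
  have he1 : 1 < Real.exp σhigh := by nlinarith [Real.add_one_le_exp σhigh]
  have h2 : 1 - Real.exp (-σhigh) ≤ Real.exp σhigh - 1 := by
    nlinarith [mul_nonneg hep.le (sq_nonneg (Real.exp σhigh - 1))]
  rcases abs_cases (γ n ω) with ⟨h, hpos⟩ | ⟨h, hneg⟩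
  · rw [h]
    nlinarith [hm]
  · rw [h]
    have h3 : 0 ≤ (-(γ n ω) * stock11 N s0 ω n)
        * ((Real.exp σhigh - 1) - (1 - Real.exp (-σhigh))) :=
      mul_nonneg (mul_nonneg (by linarith) hS.le) (by linarith)
    nlinarith [hp, h3]

lemma wealth_bound (N : ℕ) (s0 σlow σhigh A y : ℝ) (hs0 : 0 < s0)
    (hσ : σlow ≤ σhigh) (hσh : 0 < σhigh) (hA : 0 < A) (hy : y ≤ A)
    (g : ℕ → (Fin N → ℝ) → ℝ → ℝ) (hg : ∀ n ω β, 0 ≤ g n ω β)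
    (γ : ℕ → (Fin N → ℝ) → ℝ) (hγ : adapted11 N γ)
    (hsuper : ∀ ω : Fin N → ℝ, (∀ m, σlow ≤ |ω m| ∧ |ω m| ≤ σhigh) →
      ∀ n : ℕ, n ≤ N → 0 ≤ wealth11 N s0 g y γ ω n) :
    ∀ n : ℕ, n ≤ N → ∀ ω : Fin N → ℝ, (∀ m, σlow ≤ |ω m| ∧ |ω m| ≤ σhigh) →
      wealth11 N s0 g y γ ω n ≤ A * (1 + Real.exp σhigh) ^ n := by
  intro n
  induction n with
  | zero =>
    intro _ ω hω
    simpa [wealth11] using hy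
  | succ n ih =>
    intro hn1 ω hω
    have hn : n < N := hn1
    set W : ℝ := A * (1 + Real.exp σhigh) ^ n with hWdef
    have hb : |γ n ω| * ((1 - Real.exp (-σhigh)) * stock11 N s0 ω n) ≤ W :=
      gamma_key N s0 σlow σhigh hs0 hσ hσh g hg y γ hγ hsuper W n hn
        (fun ω' hω' => ih hn.le ω' hω') ω hω
    have hih := ih hn.le ω hω
    have hS : 0 < stock11 N s0 ω n := stock11_pos N s0 hs0 ω n
    set S : ℝ := stock11 N s0 ω n with hSdef
    set x : ℝ := ω ⟨n, hn⟩ with hxdef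
    have hee' : Real.exp σhigh * Real.exp (-σhigh) = 1 := by
      rw [← Real.exp_add]; simp
    have hx : |x| ≤ σhigh := (hω ⟨n, hn⟩).2
    have hex1 : Real.exp x ≤ Real.exp σhigh := Real.exp_le_exp.2 (abs_le.1 hx).2
    have hex2 : Real.exp (-σhigh) ≤ Real.exp x := Real.exp_le_exp.2 (by linarith [(abs_le.1 hx).1])
    have hep : 0 < Real.exp (-σhigh) := Real.exp_pos _
    have he1 : 1 < Real.exp σhigh := by nlinarith [Real.add_one_le_exp σhigh]
    have h2 : 1 - Real.exp (-σhigh) ≤ Real.exp σhigh - 1 := by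
      nlinarith [mul_nonneg hep.le (sq_nonneg (Real.exp σhigh - 1))]
    have habs : |S * Real.exp x - S| ≤ S * (Real.exp σhigh - 1) :=
      abs_le.2 ⟨by nlinarith, by nlinarith⟩
    have hγabs : γ n ω * (S * Real.exp x - S) ≤ |γ n ω| * (S * (Real.exp σhigh - 1)) := by
      refine (le_abs_self _).trans ?_
      rw [abs_mul]
      exact mul_le_mul_of_nonneg_left habs (abs_nonneg _)
    have h4 : |γ n ω| * (S * (Real.exp σhigh - 1)) ≤ W * Real.exp σhigh := by
      have h5 : |γ n ω| * (S * (Real.exp σhigh - 1))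
          = (|γ n ω| * ((1 - Real.exp (-σhigh)) * S)) * Real.exp σhigh := by
        linear_combination (|γ n ω| * S) * hee'
      rw [h5]
      exact mul_le_mul_of_nonneg_right hb (Real.exp_pos _).le
    have hgp : 0 ≤ g n ω ((γ n ω - (if n = 0 then 0 else γ (n - 1) ω)) * S) := hg _ _ _
    have hW1 : W * (1 + Real.exp σhigh) = A * ((1 + Real.exp σhigh) ^ n * (1 + Real.exp σhigh)) := by
      rw [hWdef]; ring
    rw [wealth11_succ, stock11_succ N s0 ω n hn, pow_succ, ← hSdef, ← hxdef]
    nlinarith [hih, hγabs, h4, hgp, hW1]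

/-- Uniform bounds on the wealth and the positions of a super-replicating strategy
(inequality (3.4) of the paper). -/
theorem stmt_11 (N : ℕ) (s0 σlow σhigh A y : ℝ)
    (hs0 : 0 < s0) (hσ0 : 0 ≤ σlow) (hσ : σlow ≤ σhigh) (hσh : 0 < σhigh)
    (hA : 0 < A) (hy : y ≤ A)
    (g : ℕ → (Fin N → ℝ) → ℝ → ℝ) (hg : ∀ n ω β, 0 ≤ g n ω β)
    (γ : ℕ → (Fin N → ℝ) → ℝ) (hγ : adapted11 N γ)
    (hsuper : ∀ ω : Fin N → ℝ, (∀ m, σlow ≤ |ω m| ∧ |ω m| ≤ σhigh) →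
      ∀ n : ℕ, n ≤ N → 0 ≤ wealth11 N s0 g y γ ω n) :
    ∀ ω : Fin N → ℝ, (∀ m, σlow ≤ |ω m| ∧ |ω m| ≤ σhigh) →
      ∀ n : ℕ, n ≤ N →
        wealth11 N s0 g y γ ω n ≤ A * (1 + Real.exp σhigh) ^ n ∧
        s0 * Real.exp (-(σhigh * N)) ≤ stock11 N s0 ω n ∧
        (n < N →
          |γ n ω| ≤ A * (1 + Real.exp σhigh) ^ n
            / ((1 - Real.exp (-σhigh)) * stock11 N s0 ω n) ∧
          |γ n ω| ≤ A * (1 + Real.exp σhigh) ^ N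
            / ((1 - Real.exp (-σhigh)) * s0 * Real.exp (-(σhigh * N)))) := by
  intro ω hω n hn
  have hωabs : ∀ m, |ω m| ≤ σhigh := fun m => (hω m).2
  have hWn := wealth_bound N s0 σlow σhigh A y hs0 hσ hσh hA hy g hg γ hγ hsuper n hn ω hω
  have hlb := stock11_lb N s0 σhigh hs0 hσh.le ω hωabs n
  refine ⟨hWn, hlb, ?_⟩
  intro hnN
  have hS : 0 < stock11 N s0 ω n := stock11_pos N s0 hs0 ω n
  have h1e : 0 < 1 - Real.exp (-σhigh) := by
    have h := Real.exp_lt_exp.2 (show -σhigh < 0 by linarith)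
    rw [Real.exp_zero] at h
    linarith
  have hb := gamma_key N s0 σlow σhigh hs0 hσ hσh g hg y γ hγ hsuper
    (A * (1 + Real.exp σhigh) ^ n) n hnN
    (fun ω' hω' => wealth_bound N s0 σlow σhigh A y hs0 hσ hσh hA hy g hg γ hγ hsuper
      n hnN.le ω' hω') ω hω
  have hden : 0 < (1 - Real.exp (-σhigh)) * stock11 N s0 ω n := mul_pos h1e hS
  have hD : 0 < s0 * Real.exp (-(σhigh * N)) := by positivity
  constructor
  · rw [le_div_iff₀ hden]
    exact hb
  · have hb2 : |γ n ω| * ((1 - Real.exp (-σhigh)) * (s0 * Real.exp (-(σhigh * N))))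
        ≤ A * (1 + Real.exp σhigh) ^ N := by
      calc |γ n ω| * ((1 - Real.exp (-σhigh)) * (s0 * Real.exp (-(σhigh * N))))
          ≤ |γ n ω| * ((1 - Real.exp (-σhigh)) * stock11 N s0 ω n) :=
            mul_le_mul_of_nonneg_left
              (mul_le_mul_of_nonneg_left hlb h1e.le) (abs_nonneg _)
        _ ≤ A * (1 + Real.exp σhigh) ^ n := hb
        _ ≤ A * (1 + Real.exp σhigh) ^ N :=
            mul_le_mul_of_nonneg_left
              (pow_le_pow_right₀ (by linarith [Real.exp_pos σhigh]) hn) hA.le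
    rw [mul_assoc, le_div_iff₀ (mul_pos h1e hD)]
    exact hb2
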